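/- Let $n \ge 2$, let $l$ be a divisor of $n$ with $1 \le l < n$, and let $u \in M_n(\mathbb{C})$ be the cyclic permutation unitary. Let $S$ be the linear span of the diagonal matrix units $\{e_{11}, \dots, e_{nn}\}$ together with $\{u^l, u^{2l}, \dots, u^{n-l}\}$, and let $E$ be the subalgebra generated by $S$. Then for every $b \in E$ with $\mathrm{tr}_n(b) = 0$ and every $k$ with $1 \le k \le l-1$, one has $\mathrm{tr}_n(u^k b) = 0$. -/

import Mathlib

open Matrix
open Fin.NatCast

/-- The cyclic permutation unitary in `Mₙ(ℂ)`. -/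
def cyclicShift (n : ℕ) [NeZero n] : Matrix (Fin n) (Fin n) ℂ :=
  Matrix.of fun i j => if j = i + 1 then 1 else 0

lemma cyclicShift_pow (n : ℕ) [NeZero n] (m : ℕ) :
    (cyclicShift n) ^ m = Matrix.of (fun i j => if j = i + (m : Fin n) then 1 else 0) := by
  induction m with
  | zero =>
    ext i j
    simp [Matrix.one_apply, eq_comm]
  | succ m ih =>
    rw [pow_succ, ih]
    ext i j
    simp only [Matrix.mul_apply, Matrix.of_apply, cyclicShift]
    rw [Finset.sum_eq_single (i + (m : Fin n))]
    · push_cast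
      simp [add_assoc]
    · intro c _ hc; simp [if_neg hc]
    · simp

/-- The subalgebra of matrices supported on pairs `(i,j)` with `i ≡ j [MOD l]`. -/
def goodAlg (n l : ℕ) [NeZero n] : Subalgebra ℂ (Matrix (Fin n) (Fin n) ℂ) where
  carrier := {b | ∀ i j : Fin n, i.val % l ≠ j.val % l → b i j = 0}
  add_mem' := by
    intro a b ha hb i j h
    simp [Matrix.add_apply, ha i j h, hb i j h]
  zero_mem' := by intro i j h; simp
  mul_mem' := by
    intro a b ha hb i j h
    simp only [Matrix.mul_apply]
    apply Finset.sum_eq_zero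
    intro m _
    by_cases hm : i.val % l = m.val % l
    · rw [hb m j (hm ▸ h), mul_zero]
    · rw [ha i m hm, zero_mul]
  one_mem' := by
    intro i j h
    exact Matrix.one_apply_ne (fun e => h (e ▸ rfl))
  algebraMap_mem' := by
    intro c i j h
    have hij : i ≠ j := fun e => h (e ▸ rfl)
    simp [Matrix.algebraMap_matrix_apply, hij]

theorem normalizedTrace_shift_subalgebra (n l : ℕ) [NeZero n] (hn : 2 ≤ n)
    (hl : l ∣ n) (hl1 : 1 ≤ l) (hln : l < n)
    (u : Matrix (Fin n) (Fin n) ℂ) (hu : u = cyclicShift n)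
    (S : Set (Matrix (Fin n) (Fin n) ℂ))
    (hS : S = {x | ∃ i : Fin n, x = Matrix.single i i 1} ∪
      {x | ∃ j : ℕ, 1 ≤ j ∧ j * l ≤ n - l ∧ x = u ^ (j * l)})
    (E : Subalgebra ℂ (Matrix (Fin n) (Fin n) ℂ)) (hE : E = Algebra.adjoin ℂ S) :
    ∀ b ∈ E, (1 / (n : ℂ)) * Matrix.trace b = 0 →
      ∀ k : ℕ, 1 ≤ k → k ≤ l - 1 →
        (1 / (n : ℂ)) * Matrix.trace (u ^ k * b) = 0 := by
  subst hu hS hE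
  intro b hb _ k hk1 hk2
  have hkl : k < l := by omega
  have hkn : k < n := by omega
  -- S ⊆ goodAlg
  have hSA : ({x | ∃ i : Fin n, x = Matrix.single i i 1} ∪
      {x | ∃ j : ℕ, 1 ≤ j ∧ j * l ≤ n - l ∧ x = (cyclicShift n) ^ (j * l)} :
      Set (Matrix (Fin n) (Fin n) ℂ)) ⊆ (goodAlg n l : Set _) := by
    rintro x (⟨i, rfl⟩ | ⟨j, _, _, rfl⟩)
    · intro i' j' h
      have : i' ≠ j' := fun e => h (e ▸ rfl)
      by_cases h1 : i = i'
      · subst h1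
        exact Matrix.single_apply_of_ne _ _ _ _ _ (by tauto)
      · exact Matrix.single_apply_of_ne _ _ _ _ _ (by tauto)
    · rw [cyclicShift_pow]
      intro i' j' h
      simp only [Matrix.of_apply, ite_eq_right_iff]
      intro hj'
      exfalso
      apply h
      subst hj'
      rw [Fin.add_def]
      simp only [Fin.val_natCast]
      rw [Nat.mod_mod_of_dvd _ hl, Nat.add_mod, Nat.mod_mod_of_dvd _ hl,
        Nat.mul_mod_left]
      simp [Nat.mod_mod_of_dvd]
  have hbA : b ∈ goodAlg n l := by
    have := Algebra.adjoin_le hSA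
    exact this hb
  have htr : Matrix.trace ((cyclicShift n) ^ k * b) = 0 := by
    rw [Matrix.trace]
    apply Finset.sum_eq_zero
    intro i _
    simp only [Matrix.diag_apply, Matrix.mul_apply, cyclicShift_pow, Matrix.of_apply]
    apply Finset.sum_eq_zero
    intro m _
    by_cases hm : m = i + (k : Fin n)
    · subst hm
      rw [if_pos rfl, one_mul]
      apply hbA
      rw [Fin.add_def]
      simp only [Fin.val_natCast, Nat.mod_eq_of_lt hkn]
      rw [Nat.mod_mod_of_dvd _ hl]
      intro hcontra
      have h0 : (i.val + k) % l = (i.val + 0) % l := by simpa using hcontra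
      have : k % l = 0 % l := Nat.ModEq.add_left_cancel' i.val h0
      rw [Nat.mod_eq_of_lt hkl, Nat.zero_mod] at this
      omega
    · rw [if_neg hm, zero_mul]
  rw [htr, mul_zero]
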